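/- Pointwise optimal discriminator: for fixed nonnegative reals a_1,...,a_n (densities p_d^i(x)), b ≥ 0 (density p_g(x)), and probability vectors p_1,...,p_n, the function f(d_1,...,d_K) = (Σ_i a_i)[ log(Σ_k d_k) ] + Σ_i a_i Σ_k p_i(k) log( d_k / Σ_j d_j ) + b log(1 − Σ_k d_k), defined for d ∈ (0,1)^K with Σ_k d_k < 1, attains its maximum at d_k* = (Σ_i p_i(k) a_i) / (Σ_i a_i + b). -/

import Mathlib

open Real

/-- pointwise optimal discriminator for the LLP-GAN objective: the integrand
`f(d) = (Σ_i a_i) log(Σ_k d_k) + Σ_i a_i Σ_k p_i(k) log(d_k/Σ_j d_j) + b log(1 - Σ_k d_k)`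
on `{d ∈ (0,1)^K : Σ_k d_k < 1}` is maximized at `d_k* = (Σ_i p_i(k) a_i)/(Σ_i a_i + b)`. -/
theorem llp_gan_stmt4 (n K : ℕ) (a : Fin n → ℝ) (b : ℝ)
    (ha0 : ∀ i, 0 ≤ a i) (ha : ∃ i, 0 < a i) (hb : 0 ≤ b)
    (p : Fin n → Fin K → ℝ) (hp : ∀ i k, 0 < p i k) (hpsum : ∀ i, ∑ k, p i k = 1)
    (f : (Fin K → ℝ) → ℝ)
    (hf : ∀ d, f d = (∑ i, a i) * log (∑ k, d k)
        + ∑ i, a i * ∑ k, p i k * log (d k / ∑ j, d j)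
        + b * log (1 - ∑ k, d k))
    (dstar : Fin K → ℝ)
    (hdstar : ∀ k, dstar k = (∑ i, p i k * a i) / ((∑ i, a i) + b)) :
    ∀ d : Fin K → ℝ, (∀ k, 0 < d k) → (∀ k, d k < 1) → (∑ k, d k) < 1 →
      f d ≤ f dstar := by
  intro d hd0 hd1 hS1
  rcases Nat.eq_zero_or_pos K with hK | hK
  · subst hK
    simp [hf]
  have : Nonempty (Fin K) := ⟨⟨0, hK⟩⟩
  obtain ⟨i0, hi0⟩ := ha
  set A : ℝ := ∑ i, a i with hA
  have hApos : 0 < A := Finset.sum_pos' (fun i _ => ha0 i) ⟨i0, Finset.mem_univ i0, hi0⟩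
  set c : Fin K → ℝ := fun k => ∑ i, p i k * a i with hc
  have hcpos : ∀ k, 0 < c k :=
    fun k => Finset.sum_pos' (fun i _ => mul_nonneg (hp i k).le (ha0 i))
      ⟨i0, Finset.mem_univ i0, mul_pos (hp i0 k) hi0⟩
  have hcsum : ∑ k, c k = A := by
    rw [hc, Finset.sum_comm]
    simp only [← Finset.sum_mul, hpsum, one_mul, hA]
  have hABpos : 0 < A + b := by linarith
  -- simplification of f
  have hsimp : ∀ e : Fin K → ℝ, (∀ k, 0 < e k) →
      f e = (∑ k, c k * log (e k)) + b * log (1 - ∑ k, e k) := by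
    intro e he
    have hSe : 0 < ∑ k, e k := Finset.sum_pos (fun k _ => he k) Finset.univ_nonempty
    have hinner : ∀ i, ∑ k, p i k * log (e k / ∑ j, e j)
        = (∑ k, p i k * log (e k)) - log (∑ j, e j) := by
      intro i
      calc ∑ k, p i k * log (e k / ∑ j, e j)
          = ∑ k, (p i k * log (e k) - p i k * log (∑ j, e j)) := by
            refine Finset.sum_congr rfl fun k _ => ?_
            rw [Real.log_div (he k).ne' hSe.ne']; ring
        _ = (∑ k, p i k * log (e k)) - (∑ k, p i k) * log (∑ j, e j) := by
            rw [Finset.sum_sub_distrib, Finset.sum_mul]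
        _ = _ := by rw [hpsum i, one_mul]
    have hswap : ∑ i, a i * ∑ k, p i k * log (e k) = ∑ k, c k * log (e k) := by
      simp only [Finset.mul_sum, hc, Finset.sum_mul]
      rw [Finset.sum_comm]
      exact Finset.sum_congr rfl fun k _ => Finset.sum_congr rfl fun i _ => by ring
    rw [hf]
    simp only [hinner, mul_sub, Finset.sum_sub_distrib, ← Finset.sum_mul, hswap, ← hA]
    ring
  have hds : ∀ k, dstar k = c k / (A + b) := fun k => hdstar k
  have hdspos : ∀ k, 0 < dstar k := fun k => by
    rw [hds k]; exact div_pos (hcpos k) hABpos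
  rw [hsimp d hd0, hsimp dstar hdspos]
  have hT : ∑ k, dstar k = A / (A + b) := by
    simp only [hds, ← Finset.sum_div, hcsum]
  set S : ℝ := ∑ k, d k with hSdef
  have hSpos : 0 < S := Finset.sum_pos (fun k _ => hd0 k) Finset.univ_nonempty
  -- pointwise Gibbs inequality
  have hkey : ∀ k, c k * log (d k) - c k * log (dstar k) ≤ (A + b) * d k - c k := by
    intro k
    have h1 : log (d k) - log (dstar k) = log (d k / dstar k) :=
      (Real.log_div (hd0 k).ne' (hdspos k).ne').symm
    have h2 : log (d k / dstar k) ≤ d k / dstar k - 1 :=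
      Real.log_le_sub_one_of_pos (div_pos (hd0 k) (hdspos k))
    have h3 : c k * (log (d k) - log (dstar k)) ≤ c k * (d k / dstar k - 1) := by
      rw [h1]; exact mul_le_mul_of_nonneg_left h2 (hcpos k).le
    have h4 : c k * (d k / dstar k - 1) = (A + b) * d k - c k := by
      rw [hds k]
      field_simp [(hcpos k).ne']
    nlinarith [h3, h4]
  have hsumkey : (∑ k, c k * log (d k)) - (∑ k, c k * log (dstar k))
      ≤ (A + b) * S - A := by
    rw [← Finset.sum_sub_distrib]
    calc ∑ k, (c k * log (d k) - c k * log (dstar k))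
        ≤ ∑ k, ((A + b) * d k - c k) := Finset.sum_le_sum fun k _ => hkey k
      _ = (A + b) * S - A := by
          rw [Finset.sum_sub_distrib, ← Finset.mul_sum, hcsum]
  rcases eq_or_lt_of_le hb with hb0 | hbpos
  · -- b = 0
    subst hb0
    simp only [zero_mul, add_zero]
    have h0 : (A + 0) * S - A ≤ 0 := by nlinarith
    linarith [hsumkey]
  · -- b > 0
    have h1T : 1 - ∑ k, dstar k = b / (A + b) := by
      rw [hT]; field_simp; ring
    have h1Tpos : 0 < 1 - ∑ k, dstar k := by rw [h1T]; positivity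
    have h1S : 0 < 1 - S := by linarith
    have hblog : b * log (1 - S) - b * log (1 - ∑ k, dstar k)
        ≤ (A + b) * (1 - S) - b := by
      have h1 : log (1 - S) - log (1 - ∑ k, dstar k)
          = log ((1 - S) / (1 - ∑ k, dstar k)) :=
        (Real.log_div h1S.ne' h1Tpos.ne').symm
      have h2 : log ((1 - S) / (1 - ∑ k, dstar k))
          ≤ (1 - S) / (1 - ∑ k, dstar k) - 1 :=
        Real.log_le_sub_one_of_pos (div_pos h1S h1Tpos)
      have h3 : b * (log (1 - S) - log (1 - ∑ k, dstar k))
          ≤ b * ((1 - S) / (1 - ∑ k, dstar k) - 1) := by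
        rw [h1]; exact mul_le_mul_of_nonneg_left h2 hb
      have h4 : b * ((1 - S) / (1 - ∑ k, dstar k) - 1) = (A + b) * (1 - S) - b := by
        rw [h1T]
        field_simp
      nlinarith [h3, h4]
    nlinarith [hsumkey, hblog]
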